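/- For all positive integers r and m, there exists a polynomial G ∈ ℚ[X] of degree m−1 satisfying G(−X) = (−1)^{m-1} G(X) (i.e., G is even if m is odd and odd if m is even) such that S_m^{(r)}(n) = C(n+r, r+1) · G(n + r/2) for all positive integers n. -/

import Mathlib

/-- Hyper-sum of powers of integers: `S m 0 n = n^m` and
`S m (r+1) n = ∑ i in [1..n], S m r i`. -/
def S (m : ℕ) : ℕ → ℕ → ℚ
  | 0, n => (n : ℚ) ^ m
  | r + 1, n => ∑ i ∈ Finset.Icc 1 n, S m r i

open Polynomial

/-- The difference polynomial `X^N - (X-1)^N` has degree `N-1` with leading coeff `N`. -/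
lemma Wrep (N : ℕ) : ((X : ℚ[X]) - 1) ^ N = (X + C (-1 : ℚ)) ^ N := by
  rw [map_neg, map_one]; ring

lemma W_coeff_high (N k : ℕ) (hk : N - 1 < k) :
    ((X : ℚ[X]) ^ N - (X - 1) ^ N).coeff k = 0 := by
  rw [Wrep, coeff_sub, coeff_X_pow, coeff_X_add_C_pow]
  rcases eq_or_lt_of_le (by omega : N ≤ k) with h | h
  · subst h
    simp
  · rw [if_neg (by omega : ¬ k = N), Nat.choose_eq_zero_of_lt h]
    simp

lemma W_coeff_top (N : ℕ) (hN : 1 ≤ N) :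
    ((X : ℚ[X]) ^ N - (X - 1) ^ N).coeff (N - 1) = (N : ℚ) := by
  rw [Wrep, coeff_sub, coeff_X_pow, coeff_X_add_C_pow]
  rw [if_neg (by omega : ¬ N - 1 = N)]
  have h2 : N - (N - 1) = 1 := by omega
  have h3 : N.choose (N - 1) = N := by
    rw [Nat.choose_symm (show 1 ≤ N by omega), Nat.choose_one_right]
  rw [h2, h3, pow_one]
  push_cast
  ring

lemma W_natDegree (N : ℕ) (hN : 1 ≤ N) :
    ((X : ℚ[X]) ^ N - (X - 1) ^ N).natDegree = N - 1 := by
  apply le_antisymm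
  · exact natDegree_le_iff_coeff_eq_zero.2 fun k hk => W_coeff_high N k hk
  · apply le_natDegree_of_ne_zero
    rw [W_coeff_top N hN]
    exact_mod_cast Nat.cast_ne_zero.mpr (by omega : N ≠ 0)

lemma W_leadingCoeff (N : ℕ) (hN : 1 ≤ N) :
    ((X : ℚ[X]) ^ N - (X - 1) ^ N).leadingCoeff = (N : ℚ) := by
  rw [Polynomial.leadingCoeff, W_natDegree N hN, W_coeff_top N hN]

/-- Existence of a discrete antiderivative. -/
lemma exists_antidiff : ∀ (d : ℕ) (P : ℚ[X]), P.natDegree ≤ d →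
    ∃ Q : ℚ[X], Q - Q.comp (X - 1) = P ∧ Q.natDegree ≤ P.natDegree + 1 ∧
      (P ≠ 0 → Q.natDegree = P.natDegree + 1) := by
  intro d
  induction d with
  | zero =>
    intro P hP
    rcases eq_or_ne P 0 with rfl | hP0
    · exact ⟨0, by simp, by simp, fun h => absurd rfl h⟩
    · have hPC : P = C (P.coeff 0) := eq_C_of_natDegree_le_zero hP
      set a := P.coeff 0 with ha
      have ha0 : a ≠ 0 := fun h => hP0 (by rw [hPC, h, map_zero])
      refine ⟨C a * X, ?_, ?_, fun _ => ?_⟩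
      · rw [mul_comp, C_comp, X_comp]
        rw [hPC]; ring
      · rw [natDegree_C_mul ha0, natDegree_X]; omega
      · rw [natDegree_C_mul ha0, natDegree_X]
        rw [hPC, natDegree_C]
  | succ d ih =>
    intro P hP
    rcases le_or_gt P.natDegree d with h | h
    · exact ih P h
    have hPd : P.natDegree = d + 1 := le_antisymm hP h
    have hP0 : P ≠ 0 := fun h0 => by simp [h0] at hPd
    set N := d + 2 with hN
    set c := P.leadingCoeff with hc
    have hc0 : c ≠ 0 := leadingCoeff_ne_zero.2 hP0
    set W : ℚ[X] := X ^ N - (X - 1) ^ N with hW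
    have hWdeg : W.natDegree = d + 1 := by
      rw [hW, W_natDegree N (by omega)]; omega
    have hWlc : W.leadingCoeff = (N : ℚ) := W_leadingCoeff N (by omega)
    have hW0 : W ≠ 0 := fun h0 => by simp [h0] at hWdeg
    set Q0 : ℚ[X] := C (c / N) * X ^ N with hQ0
    have hcN : (c / N : ℚ) ≠ 0 := by
      apply div_ne_zero hc0
      exact Nat.cast_ne_zero.mpr (by omega : N ≠ 0)
    have hQ0deg : Q0.natDegree = N := by
      rw [hQ0, natDegree_C_mul hcN, natDegree_X_pow]
    have hDQ0 : Q0 - Q0.comp (X - 1) = C (c / N) * W := by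
      rw [hQ0, hW, mul_comp, C_comp, pow_comp, X_comp]
      ring
    have hDQ0deg : (C (c / N) * W).natDegree = d + 1 := by
      rw [natDegree_C_mul hcN, hWdeg]
    have hDQ0lc : (C (c / N) * W).leadingCoeff = c := by
      rw [leadingCoeff_mul, leadingCoeff_C, hWlc]
      field_simp
      exact div_self (Nat.cast_ne_zero.mpr (by omega : N ≠ 0))
    set P' : ℚ[X] := P - C (c / N) * W with hP'
    have hP'deg : P'.natDegree ≤ d := by
      rcases eq_or_ne P' 0 with h0 | h0
      · simp [h0]
      have hdlt : P'.degree < P.degree := by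
        apply degree_sub_lt _ hP0 (by rw [hDQ0lc])
        rw [degree_eq_natDegree hP0, degree_eq_natDegree (fun h0 => by simp [h0] at hDQ0deg),
          hPd, hDQ0deg]
      have := (natDegree_lt_iff_degree_lt h0).2 (hdlt.trans_le degree_le_natDegree)
      omega
    obtain ⟨Q', hQ'1, hQ'2, _⟩ := ih P' hP'deg
    refine ⟨Q0 + Q', ?_, ?_, fun _ => ?_⟩
    · rw [add_comp]
      have : Q0 + Q' - (Q0.comp (X - 1) + Q'.comp (X - 1))
          = (Q0 - Q0.comp (X - 1)) + (Q' - Q'.comp (X - 1)) := by ring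
      rw [this, hDQ0, hQ'1, hP']; ring
    · have hlt : Q'.natDegree < Q0.natDegree := by
        rw [hQ0deg]; omega
      rw [natDegree_add_eq_left_of_natDegree_lt hlt, hQ0deg, hPd]
    · have hlt : Q'.natDegree < Q0.natDegree := by
        rw [hQ0deg]; omega
      rw [natDegree_add_eq_left_of_natDegree_lt hlt, hQ0deg, hPd]

/-- A polynomial invariant under shift by 1 is constant. -/
lemma eq_C_of_shift_eq (Q : ℚ[X]) (h : Q.comp (X - 1) = Q) : Q = C (Q.eval 0) := by
  have hshift : ∀ x : ℚ, Q.eval (x - 1) = Q.eval x := by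
    intro x
    conv_rhs => rw [← h]
    simp [eval_comp]
  have hnat : ∀ k : ℕ, Q.eval (-(k : ℚ)) = Q.eval 0 := by
    intro k
    induction k with
    | zero => simp
    | succ k ihk =>
      have := hshift (-(k : ℚ))
      push_cast
      rw [show -((k : ℚ) + 1) = -(k : ℚ) - 1 by ring, this, ihk]
  have hzero : Q - C (Q.eval 0) = 0 := by
    apply eq_zero_of_infinite_isRoot
    apply Set.infinite_of_injective_forall_mem
      (f := fun k : ℕ => -(k : ℚ))
    · intro a b hab
      simp only at hab
      have : (a : ℚ) = b := by linarith [neg_injective hab]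
      exact_mod_cast this
    · intro k
      simp only [Set.mem_setOf_eq, IsRoot, eval_sub, eval_C, hnat k, sub_self]
  linear_combination hzero

/-- Key structural lemma: the hyper-sum is a polynomial with roots and symmetry. -/
lemma key (m : ℕ) (hm : 1 ≤ m) : ∀ r : ℕ, ∃ P : ℚ[X],
    P.natDegree = m + r ∧
    (∀ n : ℕ, P.eval (n : ℚ) = S m r n) ∧
    (∀ j : ℕ, j ≤ r → P.eval (-(j : ℚ)) = 0) ∧
    P.comp (-(X + C (r : ℚ))) = C ((-1 : ℚ) ^ (m + r)) * P := by
  intro r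
  induction r with
  | zero =>
    refine ⟨X ^ m, by simp, fun n => by simp [S], fun j hj => ?_, ?_⟩
    · interval_cases j
      simp [zero_pow (by omega : m ≠ 0)]
    · have h0 : (-(X + C ((0:ℕ):ℚ))) = C (-1 : ℚ) * X := by simp
      rw [pow_comp, X_comp, h0, mul_pow, ← map_pow, Nat.add_zero]
  | succ r ihr =>
    obtain ⟨P, hPdeg, hPeval, hProots, hPsym⟩ := ihr
    have hP0 : P ≠ 0 := fun h0 => by simp [h0] at hPdeg; omega
    obtain ⟨Q₁, hQ₁diff, _, hQ₁deg⟩ := exists_antidiff P.natDegree P le_rfl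
    set Q : ℚ[X] := Q₁ - C (Q₁.eval 0) with hQdef
    have hQdiff : Q - Q.comp (X - 1) = P := by
      rw [hQdef, sub_comp, C_comp]
      rw [show Q₁ - C (Q₁.eval 0) - (Q₁.comp (X - 1) - C (Q₁.eval 0))
        = Q₁ - Q₁.comp (X - 1) by ring, hQ₁diff]
    have hQ0 : Q.eval 0 = 0 := by simp [hQdef]
    have hQdeg : Q.natDegree = m + (r + 1) := by
      rw [hQdef, natDegree_sub_C, hQ₁deg hP0, hPdeg]; omega
    clear_value Q
    have hQev : ∀ x : ℚ, Q.eval x - Q.eval (x - 1) = P.eval x := by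
      intro x
      have := congrArg (eval x) hQdiff
      simpa [eval_comp] using this
    -- evaluation at naturals
    have hQeval : ∀ n : ℕ, Q.eval (n : ℚ) = S m (r + 1) n := by
      intro n
      induction n with
      | zero => simpa [S] using hQ0
      | succ n ihn =>
        have h1 := hQev ((n : ℚ) + 1)
        have h2 : S m (r + 1) (n + 1) = S m (r + 1) n + S m r (n + 1) := by
          show (∑ i ∈ Finset.Icc 1 (n + 1), S m r i) = _
          rw [Finset.sum_Icc_succ_top (by omega : 1 ≤ n + 1)]
          rfl
        push_cast
        push_cast at h1
        rw [show (n : ℚ) + 1 - 1 = (n : ℚ) by ring] at h1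
        have h3 := hPeval (n + 1)
        push_cast at h3
        rw [h2, ← ihn, ← h3]
        linarith
    -- roots
    have hQroots : ∀ j : ℕ, j ≤ r + 1 → Q.eval (-(j : ℚ)) = 0 := by
      intro j
      induction j with
      | zero => intro _; simpa using hQ0
      | succ j ihj =>
        intro hj
        have h1 := hQev (-(j : ℚ))
        have h2 := hProots j (by omega)
        have h3 := ihj (by omega)
        push_cast
        rw [show -((j : ℚ) + 1) = -(j : ℚ) - 1 by ring]
        linarith
    -- symmetry
    have hsym : Q.comp (-(X + C ((r : ℚ) + 1))) = C ((-1 : ℚ) ^ (m + r + 1)) * Q := by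
      set ε : ℚ := (-1) ^ (m + r + 1) with hε
      clear_value ε
      have hε2 : ε * ε = 1 := by
        rw [hε, ← pow_add]
        exact Even.neg_one_pow ⟨m + r + 1, by ring⟩
      set R : ℚ[X] := C ε * Q.comp (-(X + C ((r : ℚ) + 1))) with hR
      clear_value R
      have hcompshift : (-(X + C ((r : ℚ) + 1))).comp (X - 1) = -(X + C (r : ℚ)) := by
        simp [sub_comp, neg_comp, add_comp, X_comp, C_comp]
        ring
      have hshift2 : (X - 1 : ℚ[X]).comp (-(X + C (r : ℚ))) = -(X + C ((r : ℚ) + 1)) := by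
        simp [sub_comp, X_comp, one_comp]
        ring
      have hDR : R - R.comp (X - 1) = P := by
        rw [hR, mul_comp, C_comp, comp_assoc, hcompshift]
        have key2 : Q.comp (-(X + C ((r : ℚ) + 1))) = (Q.comp (X - 1)).comp (-(X + C (r : ℚ))) := by
          rw [comp_assoc, hshift2]
        rw [key2]
        have : C ε * (Q.comp (X - 1)).comp (-(X + C (r : ℚ))) - C ε * Q.comp (-(X + C (r : ℚ)))
            = -(C ε * ((Q - Q.comp (X - 1)).comp (-(X + C (r : ℚ))))) := by
          rw [sub_comp]; ring
        rw [this, hQdiff, hPsym, ← mul_assoc, ← map_mul]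
        have hne : ε * (-1 : ℚ) ^ (m + r) = -1 := by
          rw [hε, ← pow_add]
          exact Odd.neg_one_pow ⟨m + r, by ring⟩
        rw [hne]
        simp
      have hRQ : (R - Q).comp (X - 1) = R - Q := by
        have := hDR.trans hQdiff.symm
        rw [sub_comp]
        linear_combination -this
      have hconst := eq_C_of_shift_eq (R - Q) hRQ
      have hR0 : R.eval 0 = 0 := by
        rw [hR]
        simp only [eval_mul, eval_C, eval_comp, eval_neg, eval_add, eval_X, eval_C]
        rw [show -(0 + ((r : ℚ) + 1)) = -(((r:ℕ) + 1 : ℕ) : ℚ) by push_cast; ring]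
        rw [hQroots (r + 1) le_rfl]
        ring
      have hRQ0 : R - Q = 0 := by
        rw [hconst]
        simp [eval_sub, hR0, hQ0]
      have hReqQ : R = Q := by linear_combination hRQ0
      have hfin : C ε * Q = Q.comp (-(X + C ((r : ℚ) + 1))) := by
        conv_lhs => rw [← hReqQ, hR, ← mul_assoc, ← map_mul, hε2, map_one, one_mul]
      rw [← hfin, hε]
    refine ⟨Q, hQdeg, hQeval, hQroots, ?_⟩
    have : ((r + 1 : ℕ) : ℚ) = (r : ℚ) + 1 := by push_cast; ring
    rw [this]
    rw [show m + (r + 1) = m + r + 1 by ring]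
    exact hsym

/-- Divisibility by the product of linear factors from the roots. -/
lemma dvd_of_roots : ∀ (k : ℕ) (P : ℚ[X]), (∀ j : ℕ, j ≤ k → P.eval (-(j : ℚ)) = 0) →
    (∏ j ∈ Finset.range (k + 1), (X - C (-(j : ℚ)))) ∣ P := by
  intro k
  induction k with
  | zero =>
    intro P hP
    rw [Finset.prod_range_one]
    rw [dvd_iff_isRoot]
    simpa using hP 0 le_rfl
  | succ k ihk =>
    intro P hP
    have hroot : P.eval (-((k : ℚ) + 1)) = 0 := by
      have := hP (k + 1) le_rfl
      push_cast at this
      exact this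
    have hdvd : (X - C (-((k : ℚ) + 1))) ∣ P := by
      rw [dvd_iff_isRoot]; exact hroot
    obtain ⟨P₁, hP₁⟩ := hdvd
    have hP₁roots : ∀ j : ℕ, j ≤ k → P₁.eval (-(j : ℚ)) = 0 := by
      intro j hj
      have := hP j (by omega)
      rw [hP₁] at this
      simp only [eval_mul, eval_sub, eval_X, eval_C] at this
      have hne : (-(j : ℚ) - -((k : ℚ) + 1)) ≠ 0 := by
        have : (j : ℚ) ≤ k := by exact_mod_cast hj
        intro h; rw [sub_eq_zero] at h; push_cast at h; linarith
      exact (mul_eq_zero.1 this).resolve_left hne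
    obtain ⟨H, hH⟩ := ihk P₁ hP₁roots
    refine ⟨H, ?_⟩
    rw [Finset.prod_range_succ, hP₁, hH]
    push_cast
    ring

theorem stmt_9 (r m : ℕ) (hr : 1 ≤ r) (hm : 1 ≤ m) :
    ∃ G : Polynomial ℚ, G.natDegree = m - 1 ∧
      (∀ x : ℚ, G.eval (-x) = (-1 : ℚ) ^ (m - 1) * G.eval x) ∧
      ∀ n : ℕ, 1 ≤ n →
        S m r n = ((n + r).choose (r + 1) : ℚ) * G.eval ((n : ℚ) + r / 2) := by
  obtain ⟨P, hPdeg, hPeval, hProots, hPsym⟩ := key m hm r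
  set B : ℚ[X] := ∏ j ∈ Finset.range (r + 1), (X - C (-(j : ℚ))) with hB
  have hBmonic : B.Monic := monic_prod_of_monic _ _ (fun j _ => monic_X_sub_C _)
  have hB0 : B ≠ 0 := hBmonic.ne_zero
  have hBdeg : B.natDegree = r + 1 := by
    rw [hB, natDegree_prod _ _ (fun j _ => X_sub_C_ne_zero _)]
    simp only [natDegree_X_sub_C, Finset.sum_const, Finset.card_range, smul_eq_mul, mul_one]
  obtain ⟨H, hPBH⟩ := dvd_of_roots r P hProots
  rw [← hB] at hPBH
  have hP0 : P ≠ 0 := fun h0 => by simp [h0] at hPdeg; omega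
  have hH0 : H ≠ 0 := fun h0 => hP0 (by rw [hPBH, h0, mul_zero])
  have hHdeg : H.natDegree = m - 1 := by
    have := natDegree_mul hB0 hH0
    rw [← hPBH, hPdeg, hBdeg] at this
    omega
  -- B evaluation at naturals
  have hBeval : ∀ n : ℕ, 1 ≤ n → B.eval (n : ℚ)
      = ((r + 1).factorial : ℚ) * ((n + r).choose (r + 1) : ℚ) := by
    intro n hn
    have hprod : ∀ k : ℕ, (∏ j ∈ Finset.range k, (n + j)) = n.ascFactorial k := by
      intro k
      induction k with
      | zero => simp
      | succ k ihk => rw [Finset.prod_range_succ, ihk, Nat.ascFactorial_succ]; ring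
    obtain ⟨n', rfl⟩ : ∃ n', n = n' + 1 := ⟨n - 1, by omega⟩
    have hasc := Nat.ascFactorial_eq_factorial_mul_choose n' (r + 1)
    have : B.eval ((n' + 1 : ℕ) : ℚ) = ((∏ j ∈ Finset.range (r + 1), ((n' + 1) + j) : ℕ) : ℚ) := by
      rw [hB, eval_prod]
      push_cast
      apply Finset.prod_congr rfl
      intro j _
      simp only [eval_sub, eval_X, eval_C]
      push_cast
      ring
    rw [this, hprod, hasc]
    push_cast
    rw [show n' + 1 + r = n' + (r + 1) by ring]
  -- B symmetry
  have hBsym : B.comp (-(X + C (r : ℚ))) = C ((-1 : ℚ) ^ (r + 1)) * B := by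
    rw [hB, prod_comp]
    have h1 : ∀ j ∈ Finset.range (r + 1),
        (X - C (-(j : ℚ))).comp (-(X + C (r : ℚ))) = C (-1 : ℚ) * (X - C (-(((r - j : ℕ)) : ℚ))) := by
      intro j hj
      have hjr : j ≤ r := by simpa [Nat.lt_succ_iff] using hj
      rw [sub_comp, X_comp, C_comp, Nat.cast_sub hjr]
      simp only [map_neg, map_sub, map_one]
      ring
    rw [Finset.prod_congr rfl h1, Finset.prod_mul_distrib]
    rw [Finset.prod_const, Finset.card_range, ← map_pow]
    congr 1
    have := Finset.prod_range_reflect (fun j => (X - C (-(j : ℚ)))) (r + 1)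
    rw [← this]
    apply Finset.prod_congr rfl
    intro j hj
    have hj2 : r + 1 - 1 - j = r - j := by omega
    rw [hj2]
  -- H symmetry
  have hHsym : H.comp (-(X + C (r : ℚ))) = C ((-1 : ℚ) ^ (m - 1)) * H := by
    have hcomp : B * (C ((-1 : ℚ) ^ (r + 1)) * H.comp (-(X + C (r : ℚ))))
        = B * (C ((-1 : ℚ) ^ (m + r)) * H) := by
      have h1 := hPsym
      rw [hPBH, mul_comp, hBsym] at h1
      linear_combination h1
    have h2 := mul_left_cancel₀ hB0 hcomp
    have h3 : C ((-1 : ℚ) ^ (r + 1)) * (C ((-1 : ℚ) ^ (r + 1)) * H.comp (-(X + C (r : ℚ))))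
        = C ((-1 : ℚ) ^ (r + 1)) * (C ((-1 : ℚ) ^ (m + r)) * H) := by rw [h2]
    rw [← mul_assoc, ← map_mul, ← pow_add] at h3
    rw [show (-1 : ℚ) ^ (r + 1 + (r + 1)) = 1 from Even.neg_one_pow ⟨r + 1, by ring⟩] at h3
    rw [map_one, one_mul] at h3
    rw [h3, ← mul_assoc, ← map_mul, ← pow_add]
    congr 2
    rw [show r + 1 + (m + r) = (m - 1) + 2 * (r + 1) by omega, pow_add, pow_mul]
    norm_num
  -- define G
  refine ⟨C (((r + 1).factorial : ℚ)) * H.comp (X - C ((r : ℚ) / 2)), ?_, ?_, ?_⟩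
  · have hfac : (((r + 1).factorial : ℚ)) ≠ 0 := by
      exact_mod_cast (r + 1).factorial_ne_zero
    rw [natDegree_C_mul hfac, natDegree_comp, natDegree_X_sub_C, mul_one, hHdeg]
  · intro x
    have h1 : H.eval (-x - (r : ℚ) / 2) = (-1 : ℚ) ^ (m - 1) * H.eval (x - (r : ℚ) / 2) := by
      have := congrArg (eval (x - (r : ℚ) / 2)) hHsym
      simp only [eval_comp, eval_neg, eval_add, eval_X, eval_C, eval_mul] at this
      rw [show -(x - (r : ℚ) / 2 + r) = -x - (r : ℚ) / 2 by ring] at this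
      exact this
    simp only [eval_mul, eval_C, eval_comp, eval_sub, eval_X]
    rw [show -x - (r : ℚ) / 2 = -x - (r:ℚ)/2 by ring] at h1
    rw [h1]
    ring
  · intro n hn
    have h1 : S m r n = P.eval (n : ℚ) := (hPeval n).symm
    rw [h1, hPBH]
    simp only [eval_mul, eval_C, eval_comp, eval_sub, eval_X]
    rw [hBeval n hn]
    rw [show (n : ℚ) + (r : ℚ) / 2 - (r : ℚ) / 2 = (n : ℚ) by ring]
    push_cast
    ring
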